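/- Let X₁, …, Xₙ be an i.i.d. sample from an absolutely continuous distribution symmetric about θ, with order statistics X_{1:n} ≤ ⋯ ≤ X_{n:n}, and let Y be an absolutely continuous random variable symmetric about θ with the same support, independent of the sample. Then the Pitman closeness probabilities π_{i:n} = P(|X_{i:n} − θ| < |Y − θ|) satisfy the symmetry property π_{i:n} = π_{n−i+1:n} for every i = 1, …, n. -/

import Mathlib

open MeasureTheory ProbabilityTheory
open scoped ENNReal

/-- The `i`-th order statistic (1-based) of the tuple `x : Fin n → ℝ`:
the `i`-th smallest value among `x 0, …, x (n-1)` (junk value `0` if `i - 1 ≥ n`). -/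
noncomputable def orderStat {n : ℕ} (x : Fin n → ℝ) (i : ℕ) : ℝ :=
  if h : i - 1 < n then x (Tuple.sort x ⟨i - 1, h⟩) else 0

/-- Lemma 9, symmetry property.  Let `X₁, …, Xₙ` be an i.i.d.
sample from an absolutely continuous distribution symmetric about `θ`, and let `Y` be
absolutely continuous, symmetric about `θ`, with the same support, independent of the
sample.  Then the Pitman closeness probabilities
`π_{i:n} = P(|X_{i:n} - θ| < |Y - θ|)` satisfy `π_{i:n} = π_{n-i+1:n}` for
`i = 1, …, n`. -/

lemma orderStat_reflect {n : ℕ} (c : ℝ) (x : Fin n → ℝ) {i : ℕ} (h1 : 1 ≤ i) (h2 : i ≤ n) :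
    orderStat (fun j => c - x j) i = c - orderStat x (n - i + 1) := by
  have hi : i - 1 < n := by omega
  have hi' : (n - i + 1) - 1 < n := by omega
  set y : Fin n → ℝ := fun j => c - x j with hy
  set σ : Equiv.Perm (Fin n) := Fin.revPerm.trans (Tuple.sort x) with hσ
  have hmono : Monotone (y ∘ σ) := by
    intro a b hab
    have h := Tuple.monotone_sort x (Fin.rev_le_rev.mpr hab)
    simpa [hy, hσ] using sub_le_sub_left h c
  have heq : y ∘ ⇑σ = y ∘ ⇑(Tuple.sort y) := Tuple.comp_sort_eq_comp_iff_monotone.mpr hmono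
  have h3 : orderStat y i = (y ∘ ⇑(Tuple.sort y)) ⟨i - 1, hi⟩ := by
    simp [orderStat, hi]
  rw [h3, ← heq]
  have h4 : σ ⟨i - 1, hi⟩ = Tuple.sort x ⟨(n - i + 1) - 1, hi'⟩ := by
    simp only [hσ, Equiv.trans_apply, Fin.revPerm_apply]
    congr 1
    ext
    simp [Fin.val_rev]
    omega
  simp only [Function.comp_apply, h4, hy, orderStat, dif_pos hi']

lemma measurableSet_sort {n : ℕ} (σ : Equiv.Perm (Fin n)) :
    MeasurableSet {x : Fin n → ℝ | Tuple.sort x = σ} := by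
  have hset : {x : Fin n → ℝ | Tuple.sort x = σ}
      = {x : Fin n → ℝ | Monotone (x ∘ ⇑σ)} ∩
        ⋂ (i : Fin n) (j : Fin n),
          {x : Fin n → ℝ | i < j → x (σ i) = x (σ j) → σ i < σ j} := by
    ext x
    simp only [Set.mem_setOf_eq, Set.mem_inter_iff, Set.mem_iInter]
    rw [show (Tuple.sort x = σ) ↔ (σ = Tuple.sort x) from eq_comm, Tuple.eq_sort_iff]
  rw [hset]
  apply MeasurableSet.inter
  · have : {x : Fin n → ℝ | Monotone (x ∘ ⇑σ)}
        = ⋂ (i : Fin n) (j : Fin n), {x : Fin n → ℝ | i ≤ j → x (σ i) ≤ x (σ j)} := by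
      ext x
      simp only [Set.mem_setOf_eq, Set.mem_iInter, Monotone, Function.comp_apply]
    rw [this]
    refine MeasurableSet.iInter fun i => MeasurableSet.iInter fun j => ?_
    by_cases h : i ≤ j
    · simp only [h, forall_true_left]
      exact measurableSet_le (measurable_pi_apply _) (measurable_pi_apply _)
    · simp only [h, false_implies, Set.setOf_true, MeasurableSet.univ]
  · refine MeasurableSet.iInter fun i => MeasurableSet.iInter fun j => ?_
    by_cases h : i < j
    · by_cases h' : σ i < σ j
      · simp only [h, h', forall_true_left, implies_true, Set.setOf_true, MeasurableSet.univ]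
      · have : {x : Fin n → ℝ | i < j → x (σ i) = x (σ j) → σ i < σ j}
            = {x : Fin n → ℝ | x (σ i) = x (σ j)}ᶜ := by
          ext x
          simp only [Set.mem_setOf_eq, Set.mem_compl_iff, h, forall_true_left]
          tauto
        rw [this]
        exact (measurableSet_eq_fun (f := fun x : Fin n → ℝ => x (σ i))
          (g := fun x : Fin n → ℝ => x (σ j))
          (measurable_pi_apply _) (measurable_pi_apply _)).compl
    · simp only [h, false_implies, Set.setOf_true, MeasurableSet.univ]

lemma measurable_orderStat {n : ℕ} (i : ℕ) :
    Measurable (fun x : Fin n → ℝ => orderStat x i) := by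
  by_cases h : i - 1 < n
  · have hfun : (fun x : Fin n → ℝ => orderStat x i)
        = fun x => ∑ σ : Equiv.Perm (Fin n),
            Set.indicator {y : Fin n → ℝ | Tuple.sort y = σ} (fun y => y (σ ⟨i - 1, h⟩)) x := by
      funext x
      rw [Finset.sum_eq_single (Tuple.sort x)]
      · rw [Set.indicator_of_mem (by simp) _]
        simp [orderStat, h]
      · intro σ _ hσ
        exact Set.indicator_of_notMem (by simpa using hσ.symm) _
      · simp
    rw [hfun]
    exact Finset.measurable_sum _ fun σ _ =>
      (measurable_pi_apply _).indicator (measurableSet_sort σ)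
  · simp only [orderStat, dif_neg h]
    exact measurable_const

lemma map_fun_eq_pi {Ω : Type*} [MeasurableSpace Ω] (μ : Measure Ω) [IsProbabilityMeasure μ]
    {ι : Type*} [Fintype ι] (f : ι → Ω → ℝ) (hf : ∀ i, Measurable (f i))
    (hind : iIndepFun f μ) :
    Measure.map (fun ω i => f i ω) μ = Measure.pi (fun i => Measure.map (f i) μ) := by
  haveI : ∀ i, IsProbabilityMeasure (Measure.map (f i) μ) :=
    fun i => Measure.isProbabilityMeasure_map (hf i).aemeasurable
  refine (Measure.pi_eq fun s hs => ?_).symm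
  rw [Measure.map_apply (measurable_pi_lambda _ hf)
    (MeasurableSet.pi Set.countable_univ (fun i _ => hs i))]
  have hpre : (fun ω i => f i ω) ⁻¹' Set.pi Set.univ s = ⋂ i ∈ Finset.univ, f i ⁻¹' s i := by
    ext ω; simp [Set.mem_pi]
  rw [hpre, hind.measure_inter_preimage_eq_mul Finset.univ (fun i _ => hs i)]
  exact Finset.prod_congr rfl fun i _ => (Measure.map_apply (hf i) (hs i)).symm

lemma map_reflect_eq {θ : ℝ} (ρ : Measure ℝ)
    (hsym : Measure.map (fun x => x - θ) ρ = Measure.map (fun x => θ - x) ρ) :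
    Measure.map (fun x : ℝ => 2 * θ - x) ρ = ρ := by
  have hm1 : Measurable fun x : ℝ => x - θ := measurable_id.sub measurable_const
  have hm2 : Measurable fun x : ℝ => θ - x := measurable_const.sub measurable_id
  have hm3 : Measurable fun x : ℝ => θ + x := measurable_const.add measurable_id
  have e1 : Measure.map (fun x : ℝ => θ + x) (Measure.map (fun x => x - θ) ρ) = ρ := by
    rw [Measure.map_map hm3 hm1]
    have : (fun x : ℝ => θ + x) ∘ (fun x => x - θ) = id := by funext x; simp
    rw [this, Measure.map_id]
  have e2 : Measure.map (fun x : ℝ => θ + x) (Measure.map (fun x => θ - x) ρ)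
      = Measure.map (fun x : ℝ => 2 * θ - x) ρ := by
    rw [Measure.map_map hm3 hm2]
    congr 1
    funext x
    simp [Function.comp]
    ring
  rw [← e2, ← hsym, e1]

theorem pitman_closeness_order_statistic_symmetry
    {Ω : Type*} [MeasurableSpace Ω] (μ : Measure Ω) [IsProbabilityMeasure μ]
    (n : ℕ) (hn : 0 < n) (θ : ℝ)
    (ν : Measure ℝ) [IsProbabilityMeasure ν]
    -- the sampling distribution is absolutely continuous with pdf `f`,
    -- symmetric about `θ`
    (f : ℝ → ℝ) (hf : ν = volume.withDensity (fun x => ENNReal.ofReal (f x)))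
    (hνsym : Measure.map (fun x => x - θ) ν = Measure.map (fun x => θ - x) ν)
    -- `Y` is absolutely continuous with pdf `g`, symmetric about `θ`
    (Y : Ω → ℝ) (hYmeas : Measurable Y) (g : ℝ → ℝ)
    (hg : Measure.map Y μ = volume.withDensity (fun x => ENNReal.ofReal (g x)))
    (hYsym : Measure.map (fun ω => Y ω - θ) μ = Measure.map (fun ω => θ - Y ω) μ)
    -- `Y` and `X₁` have the same support
    (hsupp : {x : ℝ | 0 < f x} = {x : ℝ | 0 < g x})
    -- the i.i.d. sample, independent of `Y`
    (X : Fin n → Ω → ℝ) (hXmeas : ∀ i, Measurable (X i))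
    (hdist : ∀ i, Measure.map (X i) μ = ν)
    (hindep : iIndepFun
        (fun o : Option (Fin n) => o.elim Y X) μ) :
    ∀ i : ℕ, 1 ≤ i → i ≤ n →
      (μ {ω | |orderStat (fun j => X j ω) i - θ| < |Y ω - θ|}).toReal
        = (μ {ω | |orderStat (fun j => X j ω) (n - i + 1) - θ| < |Y ω - θ|}).toReal := by
  intro i h1 h2
  have hmeas : ∀ o : Option (Fin n), Measurable (o.elim Y X) := by
    rintro (_ | j)
    exacts [hYmeas, hXmeas j]
  have hmeas' : ∀ o : Option (Fin n),
      Measurable ((fun t : ℝ => 2 * θ - t) ∘ o.elim Y X) :=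
    fun o => (measurable_const.sub measurable_id).comp (hmeas o)
  -- reflection invariance of marginals
  have hrefl : ∀ o : Option (Fin n),
      Measure.map ((fun t : ℝ => 2 * θ - t) ∘ o.elim Y X) μ
        = Measure.map (o.elim Y X) μ := by
    rintro (_ | j)
    · -- Y case
      have hm1 : Measurable fun x : ℝ => x - θ := by fun_prop
      have hm2 : Measurable fun x : ℝ => θ - x := by fun_prop
      have hm3 : Measurable fun t : ℝ => 2 * θ - t := by fun_prop
      have hYs : Measure.map (fun x => x - θ) (Measure.map Y μ)
          = Measure.map (fun x => θ - x) (Measure.map Y μ) := by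
        rw [Measure.map_map hm1 hYmeas, Measure.map_map hm2 hYmeas]
        exact hYsym
      show Measure.map ((fun t : ℝ => 2 * θ - t) ∘ Y) μ = Measure.map Y μ
      rw [← Measure.map_map hm3 hYmeas]
      exact map_reflect_eq (θ := θ) (Measure.map Y μ) hYs
    · -- X j case
      have := map_reflect_eq (θ := θ) ν hνsym
      have hm3 : Measurable fun t : ℝ => 2 * θ - t := by fun_prop
      calc Measure.map ((fun t : ℝ => 2 * θ - t) ∘ X j) μ
          = Measure.map (fun t : ℝ => 2 * θ - t) (Measure.map (X j) μ) :=
            (Measure.map_map hm3 (hXmeas j)).symm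
        _ = Measure.map (fun t : ℝ => 2 * θ - t) ν := by rw [hdist j]
        _ = ν := this
        _ = Measure.map (X j) μ := (hdist j).symm
  have hindep' : iIndepFun
      (fun o : Option (Fin n) => (fun t : ℝ => 2 * θ - t) ∘ o.elim Y X) μ :=
    hindep.comp (fun _ => fun t : ℝ => 2 * θ - t)
      (fun _ => measurable_const.sub measurable_id)
  -- joint laws
  have key : Measure.map (fun ω (o : Option (Fin n)) => o.elim Y X ω) μ
      = Measure.map (fun ω (o : Option (Fin n)) => ((fun t : ℝ => 2 * θ - t) ∘ o.elim Y X) ω) μ := by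
    rw [map_fun_eq_pi μ _ hmeas hindep, map_fun_eq_pi μ _ hmeas' hindep']
    exact congrArg Measure.pi (funext fun o => (hrefl o).symm)
  -- the event in the product space
  set B : Set (Option (Fin n) → ℝ) :=
    {v | |orderStat (fun j => v (some j)) i - θ| < |v none - θ|} with hB
  have hBmeas : MeasurableSet B := by
    apply measurableSet_lt
    · have hcoord : Measurable fun v : Option (Fin n) → ℝ => (fun j : Fin n => v (some j)) := by
        fun_prop
      exact (((measurable_orderStat i).comp hcoord).sub measurable_const).abs
    · exact ((measurable_pi_apply none).sub measurable_const).abs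
  have habs : ∀ a : ℝ, |2 * θ - a - θ| = |a - θ| := by
    intro a
    rw [show 2 * θ - a - θ = -(a - θ) by ring, abs_neg]
  have hpre1 : (fun ω (o : Option (Fin n)) => o.elim Y X ω) ⁻¹' B
      = {ω | |orderStat (fun j => X j ω) i - θ| < |Y ω - θ|} := rfl
  have hpre2 : (fun ω (o : Option (Fin n)) => ((fun t : ℝ => 2 * θ - t) ∘ o.elim Y X) ω) ⁻¹' B
      = {ω | |orderStat (fun j => X j ω) (n - i + 1) - θ| < |Y ω - θ|} := by
    ext ω
    simp only [Set.mem_preimage, hB, Set.mem_setOf_eq, Function.comp_apply, Option.elim]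
    rw [orderStat_reflect (2 * θ) (fun j => X j ω) h1 h2, habs, habs]
  have hWmeas : Measurable (fun ω (o : Option (Fin n)) => o.elim Y X ω) :=
    measurable_pi_lambda _ hmeas
  have hW'meas : Measurable
      (fun ω (o : Option (Fin n)) => ((fun t : ℝ => 2 * θ - t) ∘ o.elim Y X) ω) :=
    measurable_pi_lambda _ hmeas'
  have : μ {ω | |orderStat (fun j => X j ω) i - θ| < |Y ω - θ|}
      = μ {ω | |orderStat (fun j => X j ω) (n - i + 1) - θ| < |Y ω - θ|} := by
    rw [← hpre1, ← hpre2, ← Measure.map_apply hWmeas hBmeas,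
      ← Measure.map_apply hW'meas hBmeas, key]
  rw [this]
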